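/- For the disjoint union G ∪ H of graphs, max{γ_MB'(G) + γ_MB(H), γ_MB(G) + γ_MB'(H)} ≤ γ_MB'(G ∪ H) ≤ γ_MB'(G) + γ_MB'(H). -/
import Mathlib


open SimpleGraph

namespace MBD

variable {V : Type*}

/-- Dominator's claimed set `D` is a dominating set of `G`. -/
def Dominates (G : SimpleGraph V) (D : Finset V) : Prop :=
  ∀ v : V, ∃ d ∈ D, d = v ∨ G.Adj d v

/-- Staller's claimed set `S` contains the whole closed neighborhood of some vertex. -/
def StallerWinSet (G : SimpleGraph V) (S : Finset V) : Prop :=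
  ∃ v : V, ∀ u : V, (u = v ∨ G.Adj u v) → u ∈ S

variable [DecidableEq V]

mutual
  /-- `DomD G k D S`: with Dominator having claimed `D`, Staller `S`, and Dominator to
  move, Dominator has a strategy winning the Maker-Breaker domination game on `G`
  using at most `k` further moves of his own. -/
  inductive DomD (G : SimpleGraph V) : ℕ → Finset V → Finset V → Prop
    | win {k : ℕ} {D S : Finset V} : Dominates G D → DomD G k D S
    | move {k : ℕ} {D S : Finset V} (v : V) : v ∉ D → v ∉ S →
        DomS G k (insert v D) S → DomD G (k + 1) D S
  /-- Like `DomD`, but it is Staller's turn to move. -/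
  inductive DomS (G : SimpleGraph V) : ℕ → Finset V → Finset V → Prop
    | win {k : ℕ} {D S : Finset V} : Dominates G D → DomS G k D S
    | move {k : ℕ} {D S : Finset V} : (∃ v : V, v ∉ D ∧ v ∉ S) →
        (∀ v : V, v ∉ D → v ∉ S → DomD G k D (insert v S)) → DomS G k D S
end

mutual
  /-- `StallD G k D S`: with Dominator having claimed `D`, Staller `S`, and Dominator to
  move, Staller has a strategy winning (claiming a whole closed neighborhood) within at
  most `k` further moves of her own. -/
  inductive StallD (G : SimpleGraph V) : ℕ → Finset V → Finset V → Prop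
    | win {k : ℕ} {D S : Finset V} : StallerWinSet G S → StallD G k D S
    | move {k : ℕ} {D S : Finset V} : (∃ v : V, v ∉ D ∧ v ∉ S) →
        (∀ v : V, v ∉ D → v ∉ S → StallS G k (insert v D) S) → StallD G k D S
  /-- Like `StallD`, but it is Staller's turn to move. -/
  inductive StallS (G : SimpleGraph V) : ℕ → Finset V → Finset V → Prop
    | win {k : ℕ} {D S : Finset V} : StallerWinSet G S → StallS G k D S
    | move {k : ℕ} {D S : Finset V} (v : V) : v ∉ D → v ∉ S →
        StallD G k D (insert v S) → StallS G (k + 1) D S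
end

/-- Dominator has a winning strategy in the D-game (Dominator starts). -/
def DominatorWinsD (G : SimpleGraph V) : Prop := ∃ k, DomD G k ∅ ∅

/-- Dominator has a winning strategy in the S-game (Staller starts). -/
def DominatorWinsS (G : SimpleGraph V) : Prop := ∃ k, DomS G k ∅ ∅

/-- Staller has a winning strategy in the D-game (Dominator starts). -/
def StallerWinsD (G : SimpleGraph V) : Prop := ∃ k, StallD G k ∅ ∅

/-- Staller has a winning strategy in the S-game (Staller starts). -/
def StallerWinsS (G : SimpleGraph V) : Prop := ∃ k, StallS G k ∅ ∅

/-- Outcome `𝒟`: Dominator wins both the D-game and the S-game. -/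
def outcomeD (G : SimpleGraph V) : Prop := DominatorWinsD G ∧ DominatorWinsS G

/-- Outcome `𝒮`: Staller wins both the D-game and the S-game. -/
def outcomeS (G : SimpleGraph V) : Prop := StallerWinsD G ∧ StallerWinsS G

/-- Outcome `𝒩`: the first player wins in both games. -/
def outcomeN (G : SimpleGraph V) : Prop := DominatorWinsD G ∧ StallerWinsS G

/-- `γ_MB(G)`: the minimum number of Dominator's moves needed to win the D-game,
`∞` if he has no winning strategy. -/
noncomputable def gMB (G : SimpleGraph V) : ℕ∞ :=
  sInf ((fun k : ℕ => (k : ℕ∞)) '' {k | DomD G k ∅ ∅})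

/-- `γ_MB'(G)`: the minimum number of Dominator's moves needed to win the S-game. -/
noncomputable def gMB' (G : SimpleGraph V) : ℕ∞ :=
  sInf ((fun k : ℕ => (k : ℕ∞)) '' {k | DomS G k ∅ ∅})

/-- `γ_SMB(G)`: the minimum number of Staller's moves needed to win the D-game. -/
noncomputable def gSMB (G : SimpleGraph V) : ℕ∞ :=
  sInf ((fun k : ℕ => (k : ℕ∞)) '' {k | StallD G k ∅ ∅})

/-- `γ_SMB'(G)`: the minimum number of Staller's moves needed to win the S-game. -/
noncomputable def gSMB' (G : SimpleGraph V) : ℕ∞ :=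
  sInf ((fun k : ℕ => (k : ℕ∞)) '' {k | StallS G k ∅ ∅})

end MBD

namespace MBDAux
open MBD

section generic
variable {V : Type*} [DecidableEq V] {Γ : SimpleGraph V}

theorem mono_pair : ∀ k : ℕ,
    (∀ {D S : Finset V} {k'}, DomD Γ k D S → k ≤ k' → DomD Γ k' D S) ∧
    (∀ {D S : Finset V} {k'}, DomS Γ k D S → k ≤ k' → DomS Γ k' D S) := by
  intro k
  induction k with
  | zero =>
    have hD : ∀ {D S : Finset V} {k'}, DomD Γ 0 D S → 0 ≤ k' → DomD Γ k' D S := by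
      intro D S k' h _
      cases h with
      | win h => exact .win h
    refine ⟨hD, ?_⟩
    intro D S k' h _
    cases h with
    | win h => exact .win h
    | move hex resp => exact .move hex fun v hv1 hv2 => hD (resp v hv1 hv2) (Nat.zero_le _)
  | succ k ih =>
    have hD : ∀ {D S : Finset V} {k'}, DomD Γ (k+1) D S → k+1 ≤ k' → DomD Γ k' D S := by
      intro D S k' h hk
      cases h with
      | win h => exact .win h
      | move v hv1 hv2 hs =>
        obtain ⟨k'', rfl⟩ : ∃ k'', k' = k'' + 1 := ⟨k' - 1, by omega⟩
        exact .move v hv1 hv2 (ih.2 hs (by omega))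
    refine ⟨hD, ?_⟩
    intro D S k' h hk
    cases h with
    | win h => exact .win h
    | move hex resp => exact .move hex fun v hv1 hv2 => hD (resp v hv1 hv2) hk

theorem domD_mono {k k' : ℕ} {D S : Finset V} (h : DomD Γ k D S) (hk : k ≤ k') : DomD Γ k' D S :=
  (mono_pair k).1 h hk

theorem shrink_pass_pair : ∀ k : ℕ,
    (∀ (D S : Finset V) (v : V), v ∉ D → DomD Γ k D S → DomD Γ k D (S.erase v)) ∧
    (∀ (D S : Finset V), DomS Γ k D S → DomD Γ k D S) ∧
    (∀ (D S : Finset V) (v : V), v ∉ D → DomS Γ k D S → DomS Γ k D (S.erase v)) := by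
  intro k
  induction k with
  | zero =>
    have hd : ∀ (D S : Finset V) (v : V), v ∉ D → DomD Γ 0 D S → DomD Γ 0 D (S.erase v) := by
      intro D S v _ h
      cases h with
      | win h => exact .win h
    have hp : ∀ (D S : Finset V), DomS Γ 0 D S → DomD Γ 0 D S := by
      intro D S h
      cases h with
      | win h => exact .win h
      | move hex resp =>
        obtain ⟨v, hv1, hv2⟩ := hex
        cases resp v hv1 hv2 with
        | win h => exact .win h
    refine ⟨hd, hp, ?_⟩
    intro D S v hvD h
    by_cases hvS : v ∈ S
    · cases h with
      | win h => exact .win h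
      | move hex resp =>
        obtain ⟨f, hf1, hf2⟩ := hex
        refine .move ⟨f, hf1, fun hm => hf2 (Finset.mem_of_mem_erase hm)⟩ ?_
        intro w hw1 hw2
        by_cases hwv : w = v
        · subst hwv
          rw [Finset.insert_erase hvS]
          exact hp _ _ (.move ⟨f, hf1, hf2⟩ resp)
        · have hwS : w ∉ S := fun hw => hw2 (Finset.mem_erase.2 ⟨hwv, hw⟩)
          have := hd D (insert w S) v hvD (resp w hw1 hwS)
          rwa [Finset.erase_insert_of_ne hwv] at this
    · rwa [Finset.erase_eq_of_notMem hvS]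
  | succ k ih =>
    have hd : ∀ (D S : Finset V) (v : V), v ∉ D → DomD Γ (k+1) D S → DomD Γ (k+1) D (S.erase v) := by
      intro D S v hvD h
      by_cases hvS : v ∈ S
      · cases h with
        | win h => exact .win h
        | move u hu1 hu2 hs =>
          have hvu : v ∉ insert u D := by
            simp only [Finset.mem_insert]
            rintro (rfl | hv)
            · exact hu2 hvS
            · exact hvD hv
          exact .move u hu1 (fun hm => hu2 (Finset.mem_of_mem_erase hm)) (ih.2.2 _ _ v hvu hs)
      · rwa [Finset.erase_eq_of_notMem hvS]
    have hp : ∀ (D S : Finset V), DomS Γ (k+1) D S → DomD Γ (k+1) D S := by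
      intro D S h
      cases h with
      | win h => exact .win h
      | move hex resp =>
        obtain ⟨v, hv1, hv2⟩ := hex
        cases resp v hv1 hv2 with
        | win h => exact .win h
        | move u hu1 hu2 hs =>
          have hvu : v ∉ insert u D := by
            simp only [Finset.mem_insert]
            rintro (rfl | hv)
            · exact hu2 (Finset.mem_insert_self v S)
            · exact hv1 hv
          have := ih.2.2 _ _ v hvu hs
          rw [Finset.erase_insert hv2] at this
          exact .move u hu1 (fun hm => hu2 (Finset.mem_insert_of_mem hm)) this
    refine ⟨hd, hp, ?_⟩
    intro D S v hvD h
    by_cases hvS : v ∈ S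
    · cases h with
      | win h => exact .win h
      | move hex resp =>
        obtain ⟨f, hf1, hf2⟩ := hex
        refine .move ⟨f, hf1, fun hm => hf2 (Finset.mem_of_mem_erase hm)⟩ ?_
        intro w hw1 hw2
        by_cases hwv : w = v
        · subst hwv
          rw [Finset.insert_erase hvS]
          exact hp _ _ (.move ⟨f, hf1, hf2⟩ resp)
        · have hwS : w ∉ S := fun hw => hw2 (Finset.mem_erase.2 ⟨hwv, hw⟩)
          have := hd D (insert w S) v hvD (resp w hw1 hwS)
          rwa [Finset.erase_insert_of_ne hwv] at this
    · rwa [Finset.erase_eq_of_notMem hvS]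

theorem domS_pass {k : ℕ} {D S : Finset V} (h : DomS Γ k D S) : DomD Γ k D S :=
  (shrink_pass_pair k).2.1 D S h

end generic

section union
variable {α β : Type*} [DecidableEq α] [DecidableEq β]
  {G : SimpleGraph α} {H : SimpleGraph β}

theorem insert_inl_disjSum (x : α) (s : Finset α) (t : Finset β) :
    insert (Sum.inl x) (s.disjSum t) = (insert x s).disjSum t := by
  ext c; cases c <;> simp

theorem insert_inr_disjSum (y : β) (s : Finset α) (t : Finset β) :
    insert (Sum.inr y) (s.disjSum t) = s.disjSum (insert y t) := by
  ext c; cases c <;> simp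

theorem dominates_disjSum {dG : Finset α} {dH : Finset β} :
    Dominates (G ⊕g H) (dG.disjSum dH) ↔ Dominates G dG ∧ Dominates H dH := by
  constructor
  · intro h
    constructor
    · intro v
      obtain ⟨d, hd, hdv⟩ := h (Sum.inl v)
      match d with
      | Sum.inl d =>
        refine ⟨d, Finset.inl_mem_disjSum.1 hd, ?_⟩
        rcases hdv with h' | h'
        · exact Or.inl (Sum.inl.inj h')
        · exact Or.inr (by simpa using h')
      | Sum.inr d =>
        rcases hdv with h' | h'
        · exact absurd h' (by simp)
        · exact absurd h' (by simp)
    · intro v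
      obtain ⟨d, hd, hdv⟩ := h (Sum.inr v)
      match d with
      | Sum.inr d =>
        refine ⟨d, Finset.inr_mem_disjSum.1 hd, ?_⟩
        rcases hdv with h' | h'
        · exact Or.inl (Sum.inr.inj h')
        · exact Or.inr (by simpa using h')
      | Sum.inl d =>
        rcases hdv with h' | h'
        · exact absurd h' (by simp)
        · exact absurd h' (by simp)
  · rintro ⟨h1, h2⟩ (v | v)
    · obtain ⟨d, hd, hdv⟩ := h1 v
      refine ⟨Sum.inl d, Finset.inl_mem_disjSum.2 hd, ?_⟩
      rcases hdv with h' | h'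
      · exact Or.inl (by rw [h'])
      · exact Or.inr (by simpa using h')
    · obtain ⟨d, hd, hdv⟩ := h2 v
      refine ⟨Sum.inr d, Finset.inr_mem_disjSum.2 hd, ?_⟩
      rcases hdv with h' | h'
      · exact Or.inl (by rw [h'])
      · exact Or.inr (by simpa using h')

/-- If all of `α` is claimed, `G` must already be dominated and the rest of the game
projects onto `H`. -/
theorem fullG : ∀ n : ℕ,
    (∀ (dG : Finset α) (dH : Finset β) (sG : Finset α) (sH : Finset β),
      (∀ x : α, x ∈ dG ∨ x ∈ sG) →
      DomD (G ⊕g H) n (dG.disjSum dH) (sG.disjSum sH) → Dominates G dG ∧ DomD H n dH sH) ∧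
    (∀ (dG : Finset α) (dH : Finset β) (sG : Finset α) (sH : Finset β),
      (∀ x : α, x ∈ dG ∨ x ∈ sG) →
      DomS (G ⊕g H) n (dG.disjSum dH) (sG.disjSum sH) → Dominates G dG ∧ DomS H n dH sH) := by
  intro n
  induction n with
  | zero =>
    have hD : ∀ (dG : Finset α) (dH : Finset β) (sG : Finset α) (sH : Finset β),
        (∀ x : α, x ∈ dG ∨ x ∈ sG) →
        DomD (G ⊕g H) 0 (dG.disjSum dH) (sG.disjSum sH) → Dominates G dG ∧ DomD H 0 dH sH := by
      intro dG dH sG sH _ h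
      cases h with
      | win hw => exact ⟨(dominates_disjSum.1 hw).1, .win (dominates_disjSum.1 hw).2⟩
    refine ⟨hD, ?_⟩
    intro dG dH sG sH hfull h
    cases h with
    | win hw => exact ⟨(dominates_disjSum.1 hw).1, .win (dominates_disjSum.1 hw).2⟩
    | move hex resp =>
      obtain ⟨f, hf1, hf2⟩ := hex
      match f with
      | Sum.inl x =>
        rcases hfull x with hx | hx
        · exact absurd (Finset.inl_mem_disjSum.2 hx) hf1
        · exact absurd (Finset.inl_mem_disjSum.2 hx) hf2
      | Sum.inr y =>
        have hy1 : y ∉ dH := by simpa using hf1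
        have hy2 : y ∉ sH := by simpa using hf2
        have hdom : Dominates G dG := by
          have h' := resp (Sum.inr y) hf1 hf2
          rw [insert_inr_disjSum] at h'
          exact (hD _ _ _ _ hfull h').1
        refine ⟨hdom, .move ⟨y, hy1, hy2⟩ ?_⟩
        intro y' hy1' hy2'
        have h' := resp (Sum.inr y') (by simpa using hy1') (by simpa using hy2')
        rw [insert_inr_disjSum] at h'
        exact (hD _ _ _ _ hfull h').2
  | succ n ih =>
    have hD : ∀ (dG : Finset α) (dH : Finset β) (sG : Finset α) (sH : Finset β),
        (∀ x : α, x ∈ dG ∨ x ∈ sG) →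
        DomD (G ⊕g H) (n+1) (dG.disjSum dH) (sG.disjSum sH) →
        Dominates G dG ∧ DomD H (n+1) dH sH := by
      intro dG dH sG sH hfull h
      cases h with
      | win hw => exact ⟨(dominates_disjSum.1 hw).1, .win (dominates_disjSum.1 hw).2⟩
      | move w hw1 hw2 hs =>
        match w with
        | Sum.inl x =>
          rcases hfull x with hx | hx
          · exact absurd (Finset.inl_mem_disjSum.2 hx) hw1
          · exact absurd (Finset.inl_mem_disjSum.2 hx) hw2
        | Sum.inr y =>
          have hy1 : y ∉ dH := by simpa using hw1
          have hy2 : y ∉ sH := by simpa using hw2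
          rw [insert_inr_disjSum] at hs
          obtain ⟨hdom, hh⟩ := ih.2 _ _ _ _ hfull hs
          exact ⟨hdom, .move y hy1 hy2 hh⟩
    refine ⟨hD, ?_⟩
    intro dG dH sG sH hfull h
    cases h with
    | win hw => exact ⟨(dominates_disjSum.1 hw).1, .win (dominates_disjSum.1 hw).2⟩
    | move hex resp =>
      obtain ⟨f, hf1, hf2⟩ := hex
      match f with
      | Sum.inl x =>
        rcases hfull x with hx | hx
        · exact absurd (Finset.inl_mem_disjSum.2 hx) hf1
        · exact absurd (Finset.inl_mem_disjSum.2 hx) hf2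
      | Sum.inr y =>
        have hy1 : y ∉ dH := by simpa using hf1
        have hy2 : y ∉ sH := by simpa using hf2
        have hdom : Dominates G dG := by
          have h' := resp (Sum.inr y) hf1 hf2
          rw [insert_inr_disjSum] at h'
          exact (hD _ _ _ _ hfull h').1
        refine ⟨hdom, .move ⟨y, hy1, hy2⟩ ?_⟩
        intro y' hy1' hy2'
        have h' := resp (Sum.inr y') (by simpa using hy1') (by simpa using hy2')
        rw [insert_inr_disjSum] at h'
        exact (hD _ _ _ _ hfull h').2

/-- Mirror of `fullG`. -/
theorem fullH : ∀ n : ℕ,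
    (∀ (dG : Finset α) (dH : Finset β) (sG : Finset α) (sH : Finset β),
      (∀ y : β, y ∈ dH ∨ y ∈ sH) →
      DomD (G ⊕g H) n (dG.disjSum dH) (sG.disjSum sH) → Dominates H dH ∧ DomD G n dG sG) ∧
    (∀ (dG : Finset α) (dH : Finset β) (sG : Finset α) (sH : Finset β),
      (∀ y : β, y ∈ dH ∨ y ∈ sH) →
      DomS (G ⊕g H) n (dG.disjSum dH) (sG.disjSum sH) → Dominates H dH ∧ DomS G n dG sG) := by
  intro n
  induction n with
  | zero =>
    have hD : ∀ (dG : Finset α) (dH : Finset β) (sG : Finset α) (sH : Finset β),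
        (∀ y : β, y ∈ dH ∨ y ∈ sH) →
        DomD (G ⊕g H) 0 (dG.disjSum dH) (sG.disjSum sH) → Dominates H dH ∧ DomD G 0 dG sG := by
      intro dG dH sG sH _ h
      cases h with
      | win hw => exact ⟨(dominates_disjSum.1 hw).2, .win (dominates_disjSum.1 hw).1⟩
    refine ⟨hD, ?_⟩
    intro dG dH sG sH hfull h
    cases h with
    | win hw => exact ⟨(dominates_disjSum.1 hw).2, .win (dominates_disjSum.1 hw).1⟩
    | move hex resp =>
      obtain ⟨f, hf1, hf2⟩ := hex
      match f with
      | Sum.inr y =>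
        rcases hfull y with hy | hy
        · exact absurd (Finset.inr_mem_disjSum.2 hy) hf1
        · exact absurd (Finset.inr_mem_disjSum.2 hy) hf2
      | Sum.inl x =>
        have hx1 : x ∉ dG := by simpa using hf1
        have hx2 : x ∉ sG := by simpa using hf2
        have hdom : Dominates H dH := by
          have h' := resp (Sum.inl x) hf1 hf2
          rw [insert_inl_disjSum] at h'
          exact (hD _ _ _ _ hfull h').1
        refine ⟨hdom, .move ⟨x, hx1, hx2⟩ ?_⟩
        intro x' hx1' hx2'
        have h' := resp (Sum.inl x') (by simpa using hx1') (by simpa using hx2')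
        rw [insert_inl_disjSum] at h'
        exact (hD _ _ _ _ hfull h').2
  | succ n ih =>
    have hD : ∀ (dG : Finset α) (dH : Finset β) (sG : Finset α) (sH : Finset β),
        (∀ y : β, y ∈ dH ∨ y ∈ sH) →
        DomD (G ⊕g H) (n+1) (dG.disjSum dH) (sG.disjSum sH) →
        Dominates H dH ∧ DomD G (n+1) dG sG := by
      intro dG dH sG sH hfull h
      cases h with
      | win hw => exact ⟨(dominates_disjSum.1 hw).2, .win (dominates_disjSum.1 hw).1⟩
      | move w hw1 hw2 hs =>
        match w with
        | Sum.inr y =>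
          rcases hfull y with hy | hy
          · exact absurd (Finset.inr_mem_disjSum.2 hy) hw1
          · exact absurd (Finset.inr_mem_disjSum.2 hy) hw2
        | Sum.inl x =>
          have hx1 : x ∉ dG := by simpa using hw1
          have hx2 : x ∉ sG := by simpa using hw2
          rw [insert_inl_disjSum] at hs
          obtain ⟨hdom, hh⟩ := ih.2 _ _ _ _ hfull hs
          exact ⟨hdom, .move x hx1 hx2 hh⟩
    refine ⟨hD, ?_⟩
    intro dG dH sG sH hfull h
    cases h with
    | win hw => exact ⟨(dominates_disjSum.1 hw).2, .win (dominates_disjSum.1 hw).1⟩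
    | move hex resp =>
      obtain ⟨f, hf1, hf2⟩ := hex
      match f with
      | Sum.inr y =>
        rcases hfull y with hy | hy
        · exact absurd (Finset.inr_mem_disjSum.2 hy) hf1
        · exact absurd (Finset.inr_mem_disjSum.2 hy) hf2
      | Sum.inl x =>
        have hx1 : x ∉ dG := by simpa using hf1
        have hx2 : x ∉ sG := by simpa using hf2
        have hdom : Dominates H dH := by
          have h' := resp (Sum.inl x) hf1 hf2
          rw [insert_inl_disjSum] at h'
          exact (hD _ _ _ _ hfull h').1
        refine ⟨hdom, .move ⟨x, hx1, hx2⟩ ?_⟩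
        intro x' hx1' hx2'
        have h' := resp (Sum.inl x') (by simpa using hx1') (by simpa using hx2')
        rw [insert_inl_disjSum] at h'
        exact (hD _ _ _ _ hfull h').2

end union

section extractsec
variable {α β : Type*} [Fintype α] [DecidableEq α] [Fintype β] [DecidableEq β]
  {G : SimpleGraph α} {H : SimpleGraph β}

theorem extract : ∀ n : ℕ,
    (∀ (dG : Finset α) (dH : Finset β) (sG : Finset α) (sH : Finset β),
      DomD (G ⊕g H) n (dG.disjSum dH) (sG.disjSum sH) →
      ∃ a b, a + b ≤ n ∧ DomD G a dG sG ∧ DomD H b dH sH) ∧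
    (∀ (dG : Finset α) (dH : Finset β) (sG : Finset α) (sH : Finset β),
      DomS (G ⊕g H) n (dG.disjSum dH) (sG.disjSum sH) →
      ∃ a b, a + b ≤ n ∧ DomS G a dG sG ∧ DomD H b dH sH) ∧
    (∀ (dG : Finset α) (dH : Finset β) (sG : Finset α) (sH : Finset β),
      DomS (G ⊕g H) n (dG.disjSum dH) (sG.disjSum sH) →
      ∃ a b, a + b ≤ n ∧ DomD G a dG sG ∧ DomS H b dH sH) := by
  intro n
  induction n with
  | zero =>
    have hE3 : ∀ (dG : Finset α) (dH : Finset β) (sG : Finset α) (sH : Finset β),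
        DomD (G ⊕g H) 0 (dG.disjSum dH) (sG.disjSum sH) →
        ∃ a b, a + b ≤ 0 ∧ DomD G a dG sG ∧ DomD H b dH sH := by
      intro dG dH sG sH h
      cases h with
      | win hw =>
        exact ⟨0, 0, le_refl _, .win (dominates_disjSum.1 hw).1, .win (dominates_disjSum.1 hw).2⟩
    refine ⟨hE3, ?_, ?_⟩
    · intro dG dH sG sH h
      cases h with
      | win hw =>
        exact ⟨0, 0, le_refl _, .win (dominates_disjSum.1 hw).1, .win (dominates_disjSum.1 hw).2⟩
      | move hex resp =>
        set F : Finset α := Finset.univ.filter (fun x => x ∉ dG ∧ x ∉ sG) with hF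
        by_cases hFne : F.Nonempty
        · have key : ∀ x : {x // x ∈ F}, ∃ ab : ℕ × ℕ, ab.1 + ab.2 ≤ 0 ∧
              DomD G ab.1 dG (insert x.1 sG) ∧ DomD H ab.2 dH sH := by
            rintro ⟨x, hx⟩
            simp only [hF, Finset.mem_filter, Finset.mem_univ, true_and] at hx
            have h' := resp (Sum.inl x) (by simpa using hx.1) (by simpa using hx.2)
            rw [insert_inl_disjSum] at h'
            obtain ⟨a, b, hab, h1, h2⟩ := hE3 _ _ _ _ h'
            exact ⟨(a, b), hab, h1, h2⟩
          choose f hf1 hf2 hf3 using key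
          obtain ⟨x0, _, hmax⟩ := F.attach.exists_max_image (fun x => (f x).1)
            (Finset.attach_nonempty_iff.2 hFne)
          refine ⟨(f x0).1, (f x0).2, hf1 x0, ?_, hf3 x0⟩
          refine .move ?_ ?_
          · obtain ⟨z, hz⟩ := hFne
            simp only [hF, Finset.mem_filter, Finset.mem_univ, true_and] at hz
            exact ⟨z, hz.1, hz.2⟩
          · intro x hx1 hx2
            have hxF : x ∈ F := by simp [hF, hx1, hx2]
            exact domD_mono (hf2 ⟨x, hxF⟩) (hmax ⟨x, hxF⟩ (Finset.mem_attach _ _))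
        · have hfull : ∀ x : α, x ∈ dG ∨ x ∈ sG := by
            intro x; by_contra hc; push_neg at hc
            exact hFne ⟨x, by simp [hF, hc.1, hc.2]⟩
          obtain ⟨hdom, hh⟩ := (fullG 0).2 _ _ _ _ hfull (.move hex resp)
          exact ⟨0, 0, by omega, .win hdom, domS_pass hh⟩
    · intro dG dH sG sH h
      cases h with
      | win hw =>
        exact ⟨0, 0, le_refl _, .win (dominates_disjSum.1 hw).1, .win (dominates_disjSum.1 hw).2⟩
      | move hex resp =>
        set F : Finset β := Finset.univ.filter (fun y => y ∉ dH ∧ y ∉ sH) with hF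
        by_cases hFne : F.Nonempty
        · have key : ∀ y : {y // y ∈ F}, ∃ ab : ℕ × ℕ, ab.1 + ab.2 ≤ 0 ∧
              DomD G ab.1 dG sG ∧ DomD H ab.2 dH (insert y.1 sH) := by
            rintro ⟨y, hy⟩
            simp only [hF, Finset.mem_filter, Finset.mem_univ, true_and] at hy
            have h' := resp (Sum.inr y) (by simpa using hy.1) (by simpa using hy.2)
            rw [insert_inr_disjSum] at h'
            obtain ⟨a, b, hab, h1, h2⟩ := hE3 _ _ _ _ h'
            exact ⟨(a, b), hab, h1, h2⟩
          choose f hf1 hf2 hf3 using key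
          obtain ⟨y0, _, hmax⟩ := F.attach.exists_max_image (fun y => (f y).2)
            (Finset.attach_nonempty_iff.2 hFne)
          refine ⟨(f y0).1, (f y0).2, hf1 y0, hf2 y0, ?_⟩
          refine .move ?_ ?_
          · obtain ⟨z, hz⟩ := hFne
            simp only [hF, Finset.mem_filter, Finset.mem_univ, true_and] at hz
            exact ⟨z, hz.1, hz.2⟩
          · intro y hy1 hy2
            have hyF : y ∈ F := by simp [hF, hy1, hy2]
            exact domD_mono (hf3 ⟨y, hyF⟩) (hmax ⟨y, hyF⟩ (Finset.mem_attach _ _))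
        · have hfull : ∀ y : β, y ∈ dH ∨ y ∈ sH := by
            intro y; by_contra hc; push_neg at hc
            exact hFne ⟨y, by simp [hF, hc.1, hc.2]⟩
          obtain ⟨hdom, hh⟩ := (fullH 0).2 _ _ _ _ hfull (.move hex resp)
          exact ⟨0, 0, by omega, domS_pass hh, .win hdom⟩
  | succ n ih =>
    have hE3 : ∀ (dG : Finset α) (dH : Finset β) (sG : Finset α) (sH : Finset β),
        DomD (G ⊕g H) (n+1) (dG.disjSum dH) (sG.disjSum sH) →
        ∃ a b, a + b ≤ n + 1 ∧ DomD G a dG sG ∧ DomD H b dH sH := by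
      intro dG dH sG sH h
      cases h with
      | win hw =>
        exact ⟨0, 0, by omega, .win (dominates_disjSum.1 hw).1, .win (dominates_disjSum.1 hw).2⟩
      | move w hw1 hw2 hs =>
        match w with
        | Sum.inl u =>
          rw [insert_inl_disjSum] at hs
          obtain ⟨a, b, hab, h1, h2⟩ := ih.2.1 _ _ _ _ hs
          exact ⟨a+1, b, by omega, .move u (by simpa using hw1) (by simpa using hw2) h1, h2⟩
        | Sum.inr u =>
          rw [insert_inr_disjSum] at hs
          obtain ⟨a, b, hab, h1, h2⟩ := ih.2.2 _ _ _ _ hs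
          exact ⟨a, b+1, by omega, h1, .move u (by simpa using hw1) (by simpa using hw2) h2⟩
    refine ⟨hE3, ?_, ?_⟩
    · intro dG dH sG sH h
      cases h with
      | win hw =>
        exact ⟨0, 0, by omega, .win (dominates_disjSum.1 hw).1, .win (dominates_disjSum.1 hw).2⟩
      | move hex resp =>
        set F : Finset α := Finset.univ.filter (fun x => x ∉ dG ∧ x ∉ sG) with hF
        by_cases hFne : F.Nonempty
        · have key : ∀ x : {x // x ∈ F}, ∃ ab : ℕ × ℕ, ab.1 + ab.2 ≤ n + 1 ∧
              DomD G ab.1 dG (insert x.1 sG) ∧ DomD H ab.2 dH sH := by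
            rintro ⟨x, hx⟩
            simp only [hF, Finset.mem_filter, Finset.mem_univ, true_and] at hx
            have h' := resp (Sum.inl x) (by simpa using hx.1) (by simpa using hx.2)
            rw [insert_inl_disjSum] at h'
            obtain ⟨a, b, hab, h1, h2⟩ := hE3 _ _ _ _ h'
            exact ⟨(a, b), hab, h1, h2⟩
          choose f hf1 hf2 hf3 using key
          obtain ⟨x0, _, hmax⟩ := F.attach.exists_max_image (fun x => (f x).1)
            (Finset.attach_nonempty_iff.2 hFne)
          refine ⟨(f x0).1, (f x0).2, hf1 x0, ?_, hf3 x0⟩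
          refine .move ?_ ?_
          · obtain ⟨z, hz⟩ := hFne
            simp only [hF, Finset.mem_filter, Finset.mem_univ, true_and] at hz
            exact ⟨z, hz.1, hz.2⟩
          · intro x hx1 hx2
            have hxF : x ∈ F := by simp [hF, hx1, hx2]
            exact domD_mono (hf2 ⟨x, hxF⟩) (hmax ⟨x, hxF⟩ (Finset.mem_attach _ _))
        · have hfull : ∀ x : α, x ∈ dG ∨ x ∈ sG := by
            intro x; by_contra hc; push_neg at hc
            exact hFne ⟨x, by simp [hF, hc.1, hc.2]⟩
          obtain ⟨hdom, hh⟩ := (fullG (n+1)).2 _ _ _ _ hfull (.move hex resp)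
          exact ⟨0, n+1, by omega, .win hdom, domS_pass hh⟩
    · intro dG dH sG sH h
      cases h with
      | win hw =>
        exact ⟨0, 0, by omega, .win (dominates_disjSum.1 hw).1, .win (dominates_disjSum.1 hw).2⟩
      | move hex resp =>
        set F : Finset β := Finset.univ.filter (fun y => y ∉ dH ∧ y ∉ sH) with hF
        by_cases hFne : F.Nonempty
        · have key : ∀ y : {y // y ∈ F}, ∃ ab : ℕ × ℕ, ab.1 + ab.2 ≤ n + 1 ∧
              DomD G ab.1 dG sG ∧ DomD H ab.2 dH (insert y.1 sH) := by
            rintro ⟨y, hy⟩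
            simp only [hF, Finset.mem_filter, Finset.mem_univ, true_and] at hy
            have h' := resp (Sum.inr y) (by simpa using hy.1) (by simpa using hy.2)
            rw [insert_inr_disjSum] at h'
            obtain ⟨a, b, hab, h1, h2⟩ := hE3 _ _ _ _ h'
            exact ⟨(a, b), hab, h1, h2⟩
          choose f hf1 hf2 hf3 using key
          obtain ⟨y0, _, hmax⟩ := F.attach.exists_max_image (fun y => (f y).2)
            (Finset.attach_nonempty_iff.2 hFne)
          refine ⟨(f y0).1, (f y0).2, hf1 y0, hf2 y0, ?_⟩
          refine .move ?_ ?_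
          · obtain ⟨z, hz⟩ := hFne
            simp only [hF, Finset.mem_filter, Finset.mem_univ, true_and] at hz
            exact ⟨z, hz.1, hz.2⟩
          · intro y hy1 hy2
            have hyF : y ∈ F := by simp [hF, hy1, hy2]
            exact domD_mono (hf3 ⟨y, hyF⟩) (hmax ⟨y, hyF⟩ (Finset.mem_attach _ _))
        · have hfull : ∀ y : β, y ∈ dH ∨ y ∈ sH := by
            intro y; by_contra hc; push_neg at hc
            exact hFne ⟨y, by simp [hF, hc.1, hc.2]⟩
          obtain ⟨hdom, hh⟩ := (fullH (n+1)).2 _ _ _ _ hfull (.move hex resp)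
          exact ⟨n+1, 0, by omega, domS_pass hh, .win hdom⟩

end extractsec


section invsec
variable {α β : Type*} [DecidableEq α] [DecidableEq β]
  {G : SimpleGraph α} {H : SimpleGraph β}

theorem inv : ∀ n : ℕ, ∀ (k l : ℕ) (dG sGim sG : Finset α) (dH sHim sH : Finset β),
    k + l ≤ n → DomS G k dG sGim → DomS H l dH sHim → sG ⊆ sGim → sH ⊆ sHim →
    DomS (G ⊕g H) (k + l) (dG.disjSum dH) (sG.disjSum sH) := by
  intro n
  induction n using Nat.strong_induction_on with
  | _ n ih =>
  -- helper: G is already dominated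
  have wonG : ∀ (k l : ℕ) (dG sGim sG : Finset α) (dH sHim sH : Finset β),
      k + l ≤ n → Dominates G dG → DomS H l dH sHim → sG ⊆ sGim → sH ⊆ sHim →
      DomD (G ⊕g H) (k + l) (dG.disjSum dH) (sG.disjSum sH) := by
    intro k l dG sGim sG dH sHim sH hkl hGd hH hsubG hsubH
    cases hH with
    | win hHd => exact .win (dominates_disjSum.2 ⟨hGd, hHd⟩)
    | move hexH respH =>
      obtain ⟨y, hy1, hy2⟩ := hexH
      cases respH y hy1 hy2 with
      | win hHd => exact .win (dominates_disjSum.2 ⟨hGd, hHd⟩)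
      | move u hu1 hu2 hs' =>
        rename_i m
        have hneS : u ∉ sH := fun hc => hu2 (Finset.mem_insert_of_mem (hsubH hc))
        have hstep : DomS (G ⊕g H) (k + m) (dG.disjSum (insert u dH)) (sG.disjSum sH) :=
          ih (k + m) (by omega) k m dG sGim sG (insert u dH) (insert y sHim) sH
            (le_refl _) (.win hGd) hs' hsubG (hsubH.trans (Finset.subset_insert _ _))
        rw [← insert_inr_disjSum] at hstep
        exact .move (Sum.inr u) (by simpa using hu1) (by simpa using hneS) hstep
  -- helper: H is already dominated
  have wonH : ∀ (k l : ℕ) (dG sGim sG : Finset α) (dH sHim sH : Finset β),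
      k + l ≤ n → Dominates H dH → DomS G k dG sGim → sG ⊆ sGim → sH ⊆ sHim →
      DomD (G ⊕g H) (k + l) (dG.disjSum dH) (sG.disjSum sH) := by
    intro k l dG sGim sG dH sHim sH hkl hHd hG hsubG hsubH
    cases hG with
    | win hGd => exact .win (dominates_disjSum.2 ⟨hGd, hHd⟩)
    | move hexG respG =>
      obtain ⟨x, hx1, hx2⟩ := hexG
      cases respG x hx1 hx2 with
      | win hGd => exact .win (dominates_disjSum.2 ⟨hGd, hHd⟩)
      | move u hu1 hu2 hs' =>
        rename_i m
        have hneS : u ∉ sG := fun hc => hu2 (Finset.mem_insert_of_mem (hsubG hc))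
        have hstep : DomS (G ⊕g H) (m + l) (( insert u dG).disjSum dH) (sG.disjSum sH) :=
          ih (m + l) (by omega) m l (insert u dG) (insert x sGim) sG dH sHim sH
            (le_refl _) hs' (.win hHd) (hsubG.trans (Finset.subset_insert _ _)) hsubH
        rw [← insert_inl_disjSum] at hstep
        have hcnt : m + 1 + l = (m + l) + 1 := by omega
        rw [hcnt]
        exact .move (Sum.inl u) (by simpa using hu1) (by simpa using hneS) hstep
  intro k l dG sGim sG dH sHim sH hkl hG hH hsubG hsubH
  cases hG with
  | win hGd =>
    cases hH with
    | win hHd => exact .win (dominates_disjSum.2 ⟨hGd, hHd⟩)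
    | move hexH respH =>
      obtain ⟨y0, hy01, hy02⟩ := hexH
      refine .move ⟨Sum.inr y0, by simpa using hy01,
        by simpa using (fun hc => hy02 (hsubH hc))⟩ ?_
      intro v hv1 hv2
      match v with
      | Sum.inl x =>
        rw [insert_inl_disjSum]
        exact wonG k l dG (insert x sGim) (insert x sG) dH sHim sH hkl hGd
          (.move ⟨y0, hy01, hy02⟩ respH) (Finset.insert_subset_insert _ hsubG) hsubH
      | Sum.inr y =>
        rw [insert_inr_disjSum]
        have hy1 : y ∉ dH := by simpa using hv1
        have hyS : y ∉ sH := by simpa using hv2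
        by_cases hyim : y ∈ sHim
        · cases respH y0 hy01 hy02 with
          | win hHd => exact .win (dominates_disjSum.2 ⟨hGd, hHd⟩)
          | move u hu1 hu2 hs' =>
            rename_i m
            have hneS : u ∉ insert y sH := by
              simp only [Finset.mem_insert]
              rintro (rfl | hc)
              · exact hu2 (Finset.mem_insert_of_mem hyim)
              · exact hu2 (Finset.mem_insert_of_mem (hsubH hc))
            have hstep : DomS (G ⊕g H) (k + m) (dG.disjSum (insert u dH))
                (sG.disjSum (insert y sH)) :=
              ih (k + m) (by omega) k m dG sGim sG (insert u dH) (insert y0 sHim)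
                (insert y sH) (le_refl _) (.win hGd) hs' hsubG
                (by
                  intro z hz
                  rcases Finset.mem_insert.1 hz with rfl | hz
                  · exact Finset.mem_insert_of_mem hyim
                  · exact Finset.mem_insert_of_mem (hsubH hz))
            rw [← insert_inr_disjSum] at hstep
            exact .move (Sum.inr u) (by simpa using hu1) (by simpa using hneS) hstep
        · cases respH y hy1 hyim with
          | win hHd => exact .win (dominates_disjSum.2 ⟨hGd, hHd⟩)
          | move u hu1 hu2 hs' =>
            rename_i m
            have hneS : u ∉ insert y sH := by
              simp only [Finset.mem_insert]
              rintro (rfl | hc)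
              · exact hu2 (Finset.mem_insert_self _ _)
              · exact hu2 (Finset.mem_insert_of_mem (hsubH hc))
            have hstep : DomS (G ⊕g H) (k + m) (dG.disjSum (insert u dH))
                (sG.disjSum (insert y sH)) :=
              ih (k + m) (by omega) k m dG sGim sG (insert u dH) (insert y sHim)
                (insert y sH) (le_refl _) (.win hGd) hs' hsubG
                (Finset.insert_subset_insert _ hsubH)
            rw [← insert_inr_disjSum] at hstep
            exact .move (Sum.inr u) (by simpa using hu1) (by simpa using hneS) hstep
  | move hexG respG =>
    obtain ⟨x0, hx01, hx02⟩ := hexG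
    refine .move ⟨Sum.inl x0, by simpa using hx01,
      by simpa using (fun hc => hx02 (hsubG hc))⟩ ?_
    intro v hv1 hv2
    match v with
    | Sum.inl x =>
      rw [insert_inl_disjSum]
      have hx1 : x ∉ dG := by simpa using hv1
      have hxS : x ∉ sG := by simpa using hv2
      by_cases hxim : x ∈ sGim
      · cases respG x0 hx01 hx02 with
        | win hGd =>
          exact wonG k l dG (insert x0 sGim) (insert x sG) dH sHim sH hkl hGd hH
            (by
              intro z hz
              rcases Finset.mem_insert.1 hz with rfl | hz
              · exact Finset.mem_insert_of_mem hxim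
              · exact Finset.mem_insert_of_mem (hsubG hz)) hsubH
        | move u hu1 hu2 hs' =>
          rename_i m
          have hneS : u ∉ insert x sG := by
            simp only [Finset.mem_insert]
            rintro (rfl | hc)
            · exact hu2 (Finset.mem_insert_of_mem hxim)
            · exact hu2 (Finset.mem_insert_of_mem (hsubG hc))
          have hstep : DomS (G ⊕g H) (m + l) ((insert u dG).disjSum dH)
              ((insert x sG).disjSum sH) :=
            ih (m + l) (by omega) m l (insert u dG) (insert x0 sGim) (insert x sG)
              dH sHim sH (le_refl _) hs' hH
              (by
                intro z hz
                rcases Finset.mem_insert.1 hz with rfl | hz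
                · exact Finset.mem_insert_of_mem hxim
                · exact Finset.mem_insert_of_mem (hsubG hz)) hsubH
          rw [← insert_inl_disjSum] at hstep
          have hcnt : m + 1 + l = (m + l) + 1 := by omega
          rw [hcnt]
          exact .move (Sum.inl u) (by simpa using hu1) (by simpa using hneS) hstep
      · cases respG x hx1 hxim with
        | win hGd =>
          exact wonG k l dG (insert x sGim) (insert x sG) dH sHim sH hkl hGd hH
            (Finset.insert_subset_insert _ hsubG) hsubH
        | move u hu1 hu2 hs' =>
          rename_i m
          have hneS : u ∉ insert x sG := by
            simp only [Finset.mem_insert]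
            rintro (rfl | hc)
            · exact hu2 (Finset.mem_insert_self _ _)
            · exact hu2 (Finset.mem_insert_of_mem (hsubG hc))
          have hstep : DomS (G ⊕g H) (m + l) ((insert u dG).disjSum dH)
              ((insert x sG).disjSum sH) :=
            ih (m + l) (by omega) m l (insert u dG) (insert x sGim) (insert x sG)
              dH sHim sH (le_refl _) hs' hH
              (Finset.insert_subset_insert _ hsubG) hsubH
          rw [← insert_inl_disjSum] at hstep
          have hcnt : m + 1 + l = (m + l) + 1 := by omega
          rw [hcnt]
          exact .move (Sum.inl u) (by simpa using hu1) (by simpa using hneS) hstep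
    | Sum.inr y =>
      rw [insert_inr_disjSum]
      have hy1 : y ∉ dH := by simpa using hv1
      have hyS : y ∉ sH := by simpa using hv2
      cases hH with
      | win hHd =>
        exact wonH k l dG sGim sG dH (insert y sHim) (insert y sH) hkl hHd
          (.move ⟨x0, hx01, hx02⟩ respG) hsubG (Finset.insert_subset_insert _ hsubH)
      | move hexH respH =>
        by_cases hyim : y ∈ sHim
        · obtain ⟨y0, hy01, hy02⟩ := hexH
          cases respH y0 hy01 hy02 with
          | win hHd =>
            exact wonH k l dG sGim sG dH (insert y0 sHim) (insert y sH) hkl hHd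
              (.move ⟨x0, hx01, hx02⟩ respG) hsubG
              (by
                intro z hz
                rcases Finset.mem_insert.1 hz with rfl | hz
                · exact Finset.mem_insert_of_mem hyim
                · exact Finset.mem_insert_of_mem (hsubH hz))
          | move u hu1 hu2 hs' =>
            rename_i m
            have hneS : u ∉ insert y sH := by
              simp only [Finset.mem_insert]
              rintro (rfl | hc)
              · exact hu2 (Finset.mem_insert_of_mem hyim)
              · exact hu2 (Finset.mem_insert_of_mem (hsubH hc))
            have hstep : DomS (G ⊕g H) (k + m) (dG.disjSum (insert u dH))
                (sG.disjSum (insert y sH)) :=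
              ih (k + m) (by omega) k m dG sGim sG (insert u dH) (insert y0 sHim)
                (insert y sH) (le_refl _) (.move ⟨x0, hx01, hx02⟩ respG) hs' hsubG
                (by
                  intro z hz
                  rcases Finset.mem_insert.1 hz with rfl | hz
                  · exact Finset.mem_insert_of_mem hyim
                  · exact Finset.mem_insert_of_mem (hsubH hz))
            rw [← insert_inr_disjSum] at hstep
            exact .move (Sum.inr u) (by simpa using hu1) (by simpa using hneS) hstep
        · cases respH y hy1 hyim with
          | win hHd =>
            exact wonH k l dG sGim sG dH (insert y sHim) (insert y sH) hkl hHd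
              (.move ⟨x0, hx01, hx02⟩ respG) hsubG (Finset.insert_subset_insert _ hsubH)
          | move u hu1 hu2 hs' =>
            rename_i m
            have hneS : u ∉ insert y sH := by
              simp only [Finset.mem_insert]
              rintro (rfl | hc)
              · exact hu2 (Finset.mem_insert_self _ _)
              · exact hu2 (Finset.mem_insert_of_mem (hsubH hc))
            have hstep : DomS (G ⊕g H) (k + m) (dG.disjSum (insert u dH))
                (sG.disjSum (insert y sH)) :=
              ih (k + m) (by omega) k m dG sGim sG (insert u dH) (insert y sHim)
                (insert y sH) (le_refl _) (.move ⟨x0, hx01, hx02⟩ respG) hs' hsubG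
                (Finset.insert_subset_insert _ hsubH)
            rw [← insert_inr_disjSum] at hstep
            exact .move (Sum.inr u) (by simpa using hu1) (by simpa using hneS) hstep

end invsec

end MBDAux

/-- For the disjoint union `G ⊕g H`:
`max{γ_MB'(G) + γ_MB(H), γ_MB(G) + γ_MB'(H)} ≤ γ_MB'(G ∪ H) ≤ γ_MB'(G) + γ_MB'(H)`. -/
theorem stmt_8 {α β : Type*} [Fintype α] [DecidableEq α] [Fintype β] [DecidableEq β]
    (G : SimpleGraph α) (H : SimpleGraph β) :
    max (MBD.gMB' G + MBD.gMB H) (MBD.gMB G + MBD.gMB' H) ≤ MBD.gMB' (G ⊕g H) ∧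
    MBD.gMB' (G ⊕g H) ≤ MBD.gMB' G + MBD.gMB' H := by
  have hds : (∅ : Finset α).disjSum (∅ : Finset β) = (∅ : Finset (α ⊕ β)) := by
    ext c; cases c <;> simp
  constructor
  · refine max_le ?_ ?_
    · refine le_sInf ?_
      rintro b ⟨n, hn, rfl⟩
      have hn' : MBD.DomS (G ⊕g H) n ((∅ : Finset α).disjSum (∅ : Finset β))
          ((∅ : Finset α).disjSum (∅ : Finset β)) := by rw [hds]; exact hn
      obtain ⟨a, b', hab, hG, hH⟩ := (MBDAux.extract n).2.1 ∅ ∅ ∅ ∅ hn'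
      have h1 : MBD.gMB' G ≤ (a : ℕ∞) := sInf_le ⟨a, hG, rfl⟩
      have h2 : MBD.gMB H ≤ (b' : ℕ∞) := sInf_le ⟨b', hH, rfl⟩
      calc MBD.gMB' G + MBD.gMB H ≤ (a : ℕ∞) + (b' : ℕ∞) := add_le_add h1 h2
        _ ≤ (n : ℕ∞) := by
            rw [← Nat.cast_add]
            exact_mod_cast hab
    · refine le_sInf ?_
      rintro b ⟨n, hn, rfl⟩
      have hn' : MBD.DomS (G ⊕g H) n ((∅ : Finset α).disjSum (∅ : Finset β))
          ((∅ : Finset α).disjSum (∅ : Finset β)) := by rw [hds]; exact hn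
      obtain ⟨a, b', hab, hG, hH⟩ := (MBDAux.extract n).2.2 ∅ ∅ ∅ ∅ hn'
      have h1 : MBD.gMB G ≤ (a : ℕ∞) := sInf_le ⟨a, hG, rfl⟩
      have h2 : MBD.gMB' H ≤ (b' : ℕ∞) := sInf_le ⟨b', hH, rfl⟩
      calc MBD.gMB G + MBD.gMB' H ≤ (a : ℕ∞) + (b' : ℕ∞) := add_le_add h1 h2
        _ ≤ (n : ℕ∞) := by
            rw [← Nat.cast_add]
            exact_mod_cast hab
  · rcases Set.eq_empty_or_nonempty {k | MBD.DomS G k ∅ ∅} with hG0 | hG0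
    · have hTop : MBD.gMB' G = ⊤ := by
        rw [MBD.gMB', hG0]
        simp
      rw [hTop, top_add]
      exact le_top
    rcases Set.eq_empty_or_nonempty {k | MBD.DomS H k ∅ ∅} with hH0 | hH0
    · have hTop : MBD.gMB' H = ⊤ := by
        rw [MBD.gMB', hH0]
        simp
      rw [hTop, add_top]
      exact le_top
    set kG := sInf {k | MBD.DomS G k ∅ ∅} with hkGdef
    set kH := sInf {k | MBD.DomS H k ∅ ∅} with hkHdef
    have hkG : MBD.DomS G kG ∅ ∅ := Nat.sInf_mem hG0
    have hkH : MBD.DomS H kH ∅ ∅ := Nat.sInf_mem hH0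
    have hU : MBD.DomS (G ⊕g H) (kG + kH) (∅ : Finset (α ⊕ β)) (∅ : Finset (α ⊕ β)) := by
      have := MBDAux.inv (kG + kH) kG kH ∅ ∅ ∅ ∅ ∅ ∅ le_rfl hkG hkH
        (Finset.Subset.refl _) (Finset.Subset.refl _)
      rwa [hds] at this
    have h1 : MBD.gMB' (G ⊕g H) ≤ ((kG + kH : ℕ) : ℕ∞) := sInf_le ⟨kG + kH, hU, rfl⟩
    refine h1.trans ?_
    rw [Nat.cast_add]
    have h2 : (kG : ℕ∞) ≤ MBD.gMB' G := by
      refine le_sInf ?_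
      rintro b ⟨k', hk', rfl⟩
      exact Nat.cast_le.2 (Nat.sInf_le hk')
    have h3 : (kH : ℕ∞) ≤ MBD.gMB' H := by
      refine le_sInf ?_
      rintro b ⟨k', hk', rfl⟩
      exact Nat.cast_le.2 (Nat.sInf_le hk')
    exact add_le_add h2 h3
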